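/- For positive reals M, α and positive integer r, ⌈(M - α + α·⌈(M-α)/(r·α)⌉)/α⌉ ≥ ⌈M/α⌉ + ⌈M/(r·α)⌉ - 2. -/

import Mathlib

/-- For positive reals `M`, `α` with `α ≤ M` and a positive integer `r`,
`⌈(M - α + α·⌈(M-α)/(r·α)⌉)/α⌉ ≥ ⌈M/α⌉ + ⌈M/(r·α)⌉ - 2`. -/
theorem stmt_6 (M α : ℝ) (r : ℕ) (hM : 0 < M) (hα : 0 < α) (hαM : α ≤ M) (hr : 0 < r) :
    ⌈M / α⌉ + ⌈M / (r * α)⌉ - 2 ≤ ⌈(M - α + α * (⌈(M - α) / (r * α)⌉ : ℝ)) / α⌉ := by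
  have hαne : α ≠ 0 := hα.ne'
  have hrpos : (0:ℝ) < r := by exact_mod_cast hr
  have h1 : (M - α + α * (⌈(M - α) / (r * α)⌉ : ℝ)) / α
      = (M - α) / α + (⌈(M - α) / (r * α)⌉ : ℝ) := by
    field_simp
  rw [h1, Int.ceil_add_intCast]
  have h2 : (M - α) / α = M / α - 1 := by field_simp
  rw [h2, Int.ceil_sub_one]
  have h3 : M / (r * α) - 1 ≤ (M - α) / (r * α) := by
    rw [sub_div, sub_le_sub_iff_left, div_le_one (by positivity)]
    nlinarith [mul_le_mul_of_nonneg_right (show (1:ℝ) ≤ r by exact_mod_cast hr) hα.le]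
  have h4 : ⌈M / (r * α)⌉ - 1 ≤ ⌈(M - α) / (r * α)⌉ := by
    have := Int.ceil_le_ceil h3
    rwa [Int.ceil_sub_one] at this
  omega
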